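/- Let S be a Polish space, let c : S × S → [0,∞) be a bounded Borel measurable function, and let μ, ν be Borel probability measures on S. Then the one-variable Kantorovich dual problem admits a maximizer: there exists a bounded Borel measurable φ : S → ℝ with φ(x) − φ(y) ≤ c(x,y) for all x, y ∈ S such that ∫ φ dμ − ∫ φ dν = sup{ ∫ φ' dμ − ∫ φ' dν : φ' : S → ℝ bounded Borel measurable with φ'(x) − φ'(y) ≤ c(x,y) for all x, y ∈ S }. -/

import Mathlib

open MeasureTheory Filter

section auxLs

/-- A "limsup"-type operator on real sequences, defined with conditional sups/infs. -/
noncomputable def auxLs (a : ℕ → ℝ) : ℝ := ⨅ k, ⨆ m, a (k + m)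

lemma auxLs_bddAbove_tail {a : ℕ → ℝ} {M : ℝ} (h : ∀ i, |a i| ≤ M) (k : ℕ) :
    BddAbove (Set.range fun m => a (k + m)) :=
  ⟨M, by rintro x ⟨m, rfl⟩; exact (abs_le.1 (h _)).2⟩

lemma auxLs_bddBelow {a : ℕ → ℝ} {M : ℝ} (h : ∀ i, |a i| ≤ M) :
    BddBelow (Set.range fun k => ⨆ m, a (k + m)) := by
  refine ⟨-M, ?_⟩
  rintro x ⟨k, rfl⟩
  calc (-M : ℝ) ≤ a (k + 0) := (abs_le.1 (h _)).1
  _ ≤ ⨆ m, a (k + m) := le_ciSup (auxLs_bddAbove_tail h k) 0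

lemma auxLs_le {a : ℕ → ℝ} {M : ℝ} (h : ∀ i, |a i| ≤ M) : auxLs a ≤ M :=
  (ciInf_le (auxLs_bddBelow h) 0).trans (ciSup_le fun m => (abs_le.1 (h _)).2)

lemma neg_le_auxLs {a : ℕ → ℝ} {M : ℝ} (h : ∀ i, |a i| ≤ M) : -M ≤ auxLs a :=
  le_ciInf fun k => le_trans (abs_le.1 (h (k + 0))).1 (le_ciSup (auxLs_bddAbove_tail h k) 0)

lemma abs_auxLs_le {a : ℕ → ℝ} {M : ℝ} (h : ∀ i, |a i| ≤ M) : |auxLs a| ≤ M :=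
  abs_le.2 ⟨neg_le_auxLs h, auxLs_le h⟩

lemma auxLs_sub_le {a b : ℕ → ℝ} {Ma Mb C : ℝ} (ha : ∀ i, |a i| ≤ Ma) (hb : ∀ i, |b i| ≤ Mb)
    (h : ∀ i, a i - b i ≤ C) : auxLs a - auxLs b ≤ C := by
  have key : ∀ k, auxLs a ≤ C + ⨆ m, b (k + m) := by
    intro k
    refine (ciInf_le (auxLs_bddBelow ha) k).trans ?_
    refine ciSup_le fun m => ?_
    have h1 : a (k + m) ≤ C + b (k + m) := by linarith [h (k + m)]
    exact h1.trans (add_le_add_right (le_ciSup (auxLs_bddAbove_tail hb k) m) C)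
  have h2 : auxLs a - C ≤ auxLs b := le_ciInf fun k => by linarith [key k]
  linarith

lemma real_le_of_forall_pos_le_add {a b : ℝ} (h : ∀ ε : ℝ, 0 < ε → a ≤ b + ε) : a ≤ b := by
  by_contra hc
  push_neg at hc
  have := h ((a - b) / 2) (by linarith)
  linarith

lemma auxLs_eq_of_tendsto {a : ℕ → ℝ} {M l : ℝ} (h : ∀ i, |a i| ≤ M)
    (hl : Filter.Tendsto a Filter.atTop (nhds l)) : auxLs a = l := by
  have key : ∀ ε : ℝ, 0 < ε → auxLs a ≤ l + ε ∧ l ≤ auxLs a + ε := by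
    intro ε hε
    obtain ⟨K, hK⟩ := (Metric.tendsto_atTop.1 hl) ε hε
    constructor
    · refine (ciInf_le (auxLs_bddBelow h) K).trans (ciSup_le fun m => ?_)
      have := hK (K + m) (Nat.le_add_right _ _)
      rw [Real.dist_eq, abs_lt] at this
      linarith
    · have h2 : l - ε ≤ auxLs a := by
        refine le_ciInf fun k => ?_
        have hm := hK (k + K) (Nat.le_add_left _ _)
        rw [Real.dist_eq, abs_lt] at hm
        have : l - ε ≤ a (k + K) := by linarith
        exact this.trans (le_ciSup (auxLs_bddAbove_tail h k) K)
      linarith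
  exact le_antisymm
    (real_le_of_forall_pos_le_add fun ε hε => (key ε hε).1)
    (real_le_of_forall_pos_le_add fun ε hε => (key ε hε).2)

lemma auxLs_measurable {S : Type*} [MeasurableSpace S] {ψ : ℕ → S → ℝ}
    (hm : ∀ k, Measurable (ψ k)) : Measurable fun x => auxLs fun k => ψ k x := by
  unfold auxLs
  exact Measurable.iInf fun k => Measurable.iSup fun m => hm (k + m)

lemma integrable_of_abs_le {S : Type*} [MeasurableSpace S] {κ : Measure S} [IsFiniteMeasure κ]
    {g : S → ℝ} {B : ℝ} (hg : Measurable g) (hB : ∀ x, |g x| ≤ B) : Integrable g κ :=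
  ⟨hg.aestronglyMeasurable,
    HasFiniteIntegral.of_bounded (C := B) (ae_of_all _ (by simpa [Real.norm_eq_abs] using hB))⟩

end auxLs

set_option maxHeartbeats 1000000 in
/-- For a bounded Borel measurable cost `c`, the one-variable Kantorovich dual problem
admits a maximizer. -/
theorem exists_one_variable_dual_maximizer
    {S : Type*} [TopologicalSpace S] [PolishSpace S] [MeasurableSpace S] [BorelSpace S]
    (c : S × S → ℝ) (hc : Measurable c) (hc0 : ∀ p, 0 ≤ c p)
    (hcb : ∃ M : ℝ, ∀ p, c p ≤ M)
    (μ ν : Measure S) [IsProbabilityMeasure μ] [IsProbabilityMeasure ν] :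
    ∃ φ : S → ℝ, Measurable φ ∧ (∃ M : ℝ, ∀ x, |φ x| ≤ M) ∧
      (∀ x y : S, φ x - φ y ≤ c (x, y)) ∧
      ∫ x, φ x ∂μ - ∫ x, φ x ∂ν =
        ⨆ φ' : {φ' : S → ℝ // Measurable φ' ∧ (∃ M : ℝ, ∀ x, |φ' x| ≤ M) ∧
            ∀ x y : S, φ' x - φ' y ≤ c (x, y)},
          (∫ x, φ'.1 x ∂μ - ∫ x, φ'.1 x ∂ν) := by
  classical
  obtain ⟨M₀, hM₀⟩ := hcb
  set M : ℝ := max M₀ 0 with hMdef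
  have hcM : ∀ p, c p ≤ M := fun p => (hM₀ p).trans (le_max_left _ _)
  have hM0 : (0:ℝ) ≤ M := le_max_right _ _
  -- S is nonempty
  have hS : Nonempty S := by
    by_contra h
    rw [not_nonempty_iff] at h
    have h1 : μ Set.univ = 1 := measure_univ
    rw [Set.univ_eq_empty_iff.2 h, measure_empty] at h1
    exact zero_ne_one h1
  obtain ⟨x0⟩ := hS
  -- notation
  set T := {φ' : S → ℝ // Measurable φ' ∧ (∃ M : ℝ, ∀ x, |φ' x| ≤ M) ∧
      ∀ x y : S, φ' x - φ' y ≤ c (x, y)} with hT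
  set f : (S → ℝ) → ℝ := fun ψ => ∫ x, ψ x ∂μ - ∫ x, ψ x ∂ν with hf
  have hTne : Nonempty T :=
    ⟨⟨fun _ => 0, measurable_const, ⟨0, fun x => by simp⟩, fun x y => by
      simpa using hc0 (x, y)⟩⟩
  -- upper bound for f on feasible functions
  have hub : ∀ φ' : T, f φ'.1 ≤ M := by
    rintro ⟨φ', hm, ⟨B, hB⟩, hfe⟩
    have hintμ : Integrable φ' μ := integrable_of_abs_le hm hB
    have hintν : Integrable φ' ν := integrable_of_abs_le hm hB
    have key : ∀ x, φ' x ≤ M + ∫ y, φ' y ∂ν := by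
      intro x
      have h1 : (∫ _y, φ' x ∂ν) ≤ ∫ y, M + φ' y ∂ν := by
        refine integral_mono (integrable_const _) ((integrable_const _).add hintν) fun y => ?_
        have := hfe x y
        have := hcM (x, y)
        linarith
      simpa [integral_add (integrable_const (c := M)) hintν, measure_univ] using h1
    have h2 : (∫ x, φ' x ∂μ) ≤ ∫ _x, M + ∫ y, φ' y ∂ν ∂μ :=
      integral_mono hintμ (integrable_const _) key
    simp only [integral_const, probReal_univ, one_smul] at h2
    simp only [hf]
    linarith
  have hbdd : BddAbove (Set.range fun φ' : T => f φ'.1) := by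
    refine ⟨M, ?_⟩
    rintro x ⟨φ', rfl⟩
    exact hub φ'
  set V : ℝ := ⨆ φ' : T, f φ'.1 with hV
  -- near maximizers, normalized to be bounded by M
  have hnear : ∀ n : ℕ, ∃ ψ : S → ℝ, Measurable ψ ∧ (∀ x, |ψ x| ≤ M) ∧
      (∀ x y, ψ x - ψ y ≤ c (x, y)) ∧ V - 1/(n+1) ≤ f ψ := by
    intro n
    have hlt : V - 1/((n:ℝ)+1) < V := sub_lt_self _ (by positivity)
    obtain ⟨⟨φ', hm, ⟨B, hB⟩, hfe⟩, hφ'⟩ := exists_lt_of_lt_ciSup hlt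
    refine ⟨fun x => φ' x - φ' x0, hm.sub measurable_const, ?_, ?_, ?_⟩
    · intro x
      rw [abs_le]
      constructor
      · show -M ≤ φ' x - φ' x0
        have := hfe x0 x
        have := hcM (x0, x)
        linarith
      · show φ' x - φ' x0 ≤ M
        have := hfe x x0
        have := hcM (x, x0)
        linarith
    · intro x y
      show φ' x - φ' x0 - (φ' y - φ' x0) ≤ c (x, y)
      have := hfe x y
      linarith
    · have hintμ : Integrable φ' μ := integrable_of_abs_le hm hB
      have hintν : Integrable φ' ν := integrable_of_abs_le hm hB
      have e1 : ∫ x, (φ' x - φ' x0) ∂μ = (∫ x, φ' x ∂μ) - φ' x0 := by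
        rw [integral_sub hintμ (integrable_const _)]
        simp [measure_univ]
      have e2 : ∫ x, (φ' x - φ' x0) ∂ν = (∫ x, φ' x ∂ν) - φ' x0 := by
        rw [integral_sub hintν (integrable_const _)]
        simp [measure_univ]
      simp only [hf] at hφ' ⊢
      rw [e1, e2]
      linarith
  -- the finite measure lam = μ + ν
  set lam : Measure S := μ + ν with hlam
  have hlamuniv : (lam Set.univ).toReal = 2 := by
    simp [hlam, Measure.add_apply, measure_univ]
    norm_num
  have hintlam : ∀ {g : S → ℝ} {B : ℝ}, Measurable g → (∀ x, |g x| ≤ B) → Integrable g lam :=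
    fun hg hB => integrable_of_abs_le hg hB
  set N : (S → ℝ) → ℝ := fun ψ => ∫ x, (ψ x)^2 ∂lam with hN
  -- sets of near-maximizers
  set A : ℕ → Set (S → ℝ) := fun n => {ψ | Measurable ψ ∧ (∀ x, |ψ x| ≤ M) ∧
      (∀ x y, ψ x - ψ y ≤ c (x, y)) ∧ V - 1/(n+1) ≤ f ψ} with hA
  have hAne : ∀ n, (A n).Nonempty := fun n => by
    obtain ⟨ψ, h1, h2, h3, h4⟩ := hnear n
    exact ⟨ψ, h1, h2, h3, h4⟩
  have hAanti : ∀ {n m : ℕ}, n ≤ m → A m ⊆ A n := by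
    rintro n m hnm ψ ⟨h1, h2, h3, h4⟩
    refine ⟨h1, h2, h3, le_trans ?_ h4⟩
    have : 1/((m:ℝ)+1) ≤ 1/((n:ℝ)+1) := by
      apply one_div_le_one_div_of_le (by positivity)
      exact_mod_cast add_le_add_left (Nat.cast_le.2 hnm) 1
    linarith
  -- N is bounded on A n, nonneg
  have hNnonneg : ∀ ψ, 0 ≤ N ψ := fun ψ => integral_nonneg fun x => sq_nonneg _
  have hNbound : ∀ n, ∀ ψ ∈ A n, N ψ ≤ 2 * M^2 := by
    rintro n ψ ⟨h1, h2, -, -⟩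
    have : N ψ ≤ ∫ _x, M^2 ∂lam := by
      refine integral_mono (hintlam (h1.pow_const 2) (B := M^2) fun x => ?_)
        (integrable_const _) fun x => ?_
      · rw [abs_of_nonneg (sq_nonneg _)]
        calc (ψ x)^2 = |ψ x|^2 := (sq_abs _).symm
        _ ≤ M^2 := by
            apply pow_le_pow_left₀ (abs_nonneg _) (h2 x)
      · calc (ψ x)^2 = |ψ x|^2 := (sq_abs _).symm
        _ ≤ M^2 := by
            apply pow_le_pow_left₀ (abs_nonneg _) (h2 x)
    rw [integral_const, measureReal_def, hlamuniv, smul_eq_mul] at this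
    linarith
  set d : ℕ → ℝ := fun n => sInf (N '' A n) with hd
  have hdlb : ∀ n, BddBelow (N '' A n) := fun n =>
    ⟨0, by rintro x ⟨ψ, -, rfl⟩; exact hNnonneg ψ⟩
  have hdmono : Monotone d := by
    intro n m hnm
    exact csInf_le_csInf (hdlb n) ((hAne m).image N) (fun _ ⟨x, hx, e⟩ => ⟨x, hAanti hnm hx, e⟩)
  have hdub : ∀ n, d n ≤ 2 * M^2 := by
    intro n
    obtain ⟨ψ, hψ⟩ := hAne n
    exact (csInf_le (hdlb n) ⟨ψ, hψ, rfl⟩).trans (hNbound n ψ hψ)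
  set D : ℝ := ⨆ n, d n with hD
  have hDbdd : BddAbove (Set.range d) := ⟨2 * M^2, by rintro x ⟨n, rfl⟩; exact hdub n⟩
  have hdD : ∀ n, d n ≤ D := fun n => le_ciSup hDbdd n
  have hdtendsto : Tendsto d atTop (nhds D) := tendsto_atTop_ciSup hdmono hDbdd
  -- choose near minimizers of N in A n
  have hψex : ∀ n : ℕ, ∃ ψ ∈ A n, N ψ < d n + 1/(n+1) := by
    intro n
    have : d n < d n + 1/((n:ℝ)+1) := lt_add_of_pos_right _ (by positivity)
    obtain ⟨y, ⟨ψ, hψ, rfl⟩, hy⟩ := (csInf_lt_iff (hdlb n) ((hAne n).image N)).1 this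
    exact ⟨ψ, hψ, hy⟩
  choose ψ hψA hψN using hψex
  -- the parallelogram estimate
  have hkey : ∀ n m : ℕ, n ≤ m →
      (∫ x, ((ψ n x - ψ m x)/2)^2 ∂lam) ≤ (D - d n)/2 + 1/(n+1) := by
    intro n m hnm
    obtain ⟨hm1, hb1, hf1, hv1⟩ := hψA n
    obtain ⟨hm2, hb2, hf2, hv2⟩ := hψA m
    -- the midpoint is in A n
    have hmid : (fun x => (ψ n x + ψ m x)/2) ∈ A n := by
      refine ⟨(hm1.add hm2).div_const 2, fun x => ?_, fun x y => ?_, ?_⟩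
      · show |(ψ n x + ψ m x)/2| ≤ M
        rw [abs_div]
        have := abs_add_le (ψ n x) (ψ m x)
        have := hb1 x; have := hb2 x
        rw [abs_of_pos (by norm_num : (0:ℝ) < 2)]
        linarith
      · show (ψ n x + ψ m x)/2 - (ψ n y + ψ m y)/2 ≤ c (x, y)
        have := hf1 x y; have := hf2 x y
        linarith
      · have hintμ1 : Integrable (ψ n) μ := integrable_of_abs_le hm1 hb1
        have hintμ2 : Integrable (ψ m) μ := integrable_of_abs_le hm2 hb2
        have hintν1 : Integrable (ψ n) ν := integrable_of_abs_le hm1 hb1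
        have hintν2 : Integrable (ψ m) ν := integrable_of_abs_le hm2 hb2
        have e1 : ∫ x, (ψ n x + ψ m x)/2 ∂μ = ((∫ x, ψ n x ∂μ) + ∫ x, ψ m x ∂μ)/2 := by
          rw [integral_div, integral_add hintμ1 hintμ2]
        have e2 : ∫ x, (ψ n x + ψ m x)/2 ∂ν = ((∫ x, ψ n x ∂ν) + ∫ x, ψ m x ∂ν)/2 := by
          rw [integral_div, integral_add hintν1 hintν2]
        have h1m : 1/((m:ℝ)+1) ≤ 1/((n:ℝ)+1) := by
          apply one_div_le_one_div_of_le (by positivity)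
          exact_mod_cast add_le_add_left (Nat.cast_le.2 hnm) 1
        simp only [hf] at hv1 hv2 ⊢
        rw [show (∫ x, (fun x => (ψ n x + ψ m x)/2) x ∂μ) = ∫ x, (ψ n x + ψ m x)/2 ∂μ from rfl,
          show (∫ x, (fun x => (ψ n x + ψ m x)/2) x ∂ν) = ∫ x, (ψ n x + ψ m x)/2 ∂ν from rfl,
          e1, e2]
        linarith
    have hdn : d n ≤ N (fun x => (ψ n x + ψ m x)/2) :=
      csInf_le (hdlb n) ⟨_, hmid, rfl⟩
    -- parallelogram identity
    have hint1 : Integrable (fun x => ((ψ n x - ψ m x)/2)^2) lam := by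
      refine hintlam (((hm1.sub hm2).div_const 2).pow_const 2) (B := M^2) fun x => ?_
      rw [abs_of_nonneg (sq_nonneg _), ← sq_abs, abs_div, abs_of_pos (by norm_num : (0:ℝ) < 2)]
      have h := abs_sub (ψ n x) (ψ m x)
      have := hb1 x; have := hb2 x
      have habs : |ψ n x - ψ m x| / 2 ≤ M := by linarith
      exact pow_le_pow_left₀ (by positivity) habs 2
    have hint2 : Integrable (fun x => ((ψ n x + ψ m x)/2)^2) lam := by
      refine hintlam (((hm1.add hm2).div_const 2).pow_const 2) (B := M^2) fun x => ?_
      rw [abs_of_nonneg (sq_nonneg _), ← sq_abs, abs_div, abs_of_pos (by norm_num : (0:ℝ) < 2)]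
      have := abs_add_le (ψ n x) (ψ m x)
      have := hb1 x; have := hb2 x
      have habs : |ψ n x + ψ m x| / 2 ≤ M := by linarith
      exact pow_le_pow_left₀ (by positivity) habs 2
    have hintn : Integrable (fun x => (ψ n x)^2) lam := by
      refine hintlam (hm1.pow_const 2) (B := M^2) fun x => ?_
      rw [abs_of_nonneg (sq_nonneg _), ← sq_abs]
      exact pow_le_pow_left₀ (abs_nonneg _) (hb1 x) 2
    have hintm : Integrable (fun x => (ψ m x)^2) lam := by
      refine hintlam (hm2.pow_const 2) (B := M^2) fun x => ?_
      rw [abs_of_nonneg (sq_nonneg _), ← sq_abs]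
      exact pow_le_pow_left₀ (abs_nonneg _) (hb2 x) 2
    have hsum : (∫ x, ((ψ n x - ψ m x)/2)^2 ∂lam) + (∫ x, ((ψ n x + ψ m x)/2)^2 ∂lam)
        = (∫ x, (ψ n x)^2 ∂lam)/2 + (∫ x, (ψ m x)^2 ∂lam)/2 := by
      rw [← integral_add hint1 hint2, ← integral_div, ← integral_div,
        ← integral_add (hintn.div_const 2) (hintm.div_const 2)]
      refine integral_congr_ae (ae_of_all _ fun x => ?_)
      show ((ψ n x - ψ m x)/2)^2 + ((ψ n x + ψ m x)/2)^2 = (ψ n x)^2/2 + (ψ m x)^2/2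
      ring
    have hpar : (∫ x, ((ψ n x - ψ m x)/2)^2 ∂lam)
        = (N (ψ n))/2 + (N (ψ m))/2 - N (fun x => (ψ n x + ψ m x)/2) := by
      simp only [hN]
      linarith [hsum]
    have h1m : 1/((m:ℝ)+1) ≤ 1/((n:ℝ)+1) := by
      apply one_div_le_one_div_of_le (by positivity)
      exact_mod_cast add_le_add_left (Nat.cast_le.2 hnm) 1
    have hNn := hψN n
    have hNm := hψN m
    have hdm := hdD m
    rw [hpar]
    linarith
  -- Cauchy property
  have hcauchy : ∀ ε : ℝ, 0 < ε → ∃ K : ℕ, ∀ n m : ℕ, K ≤ n → K ≤ m →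
      (∫ x, ((ψ n x - ψ m x)/2)^2 ∂lam) ≤ ε := by
    intro ε hε
    have h1 : ∀ᶠ n in atTop, D - d n < ε := by
      have := hdtendsto
      rw [Metric.tendsto_atTop] at this
      obtain ⟨K, hK⟩ := this ε hε
      refine eventually_atTop.2 ⟨K, fun n hn => ?_⟩
      have := hK n hn
      rw [Real.dist_eq, abs_lt] at this
      linarith
    have h2 : ∀ᶠ n : ℕ in atTop, 1/((n:ℝ)+1) < ε/2 := by
      have := tendsto_one_div_add_atTop_nhds_zero_nat (𝕜 := ℝ)
      rw [Metric.tendsto_atTop] at this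
      obtain ⟨K, hK⟩ := this (ε/2) (by linarith)
      refine eventually_atTop.2 ⟨K, fun n hn => ?_⟩
      have := hK n hn
      rw [Real.dist_eq, sub_zero, abs_of_pos (by positivity)] at this
      exact this
    obtain ⟨K, hK⟩ := eventually_atTop.1 (h1.and h2)
    refine ⟨K, fun n m hn hm => ?_⟩
    rcases le_total n m with h | h
    · have := hkey n m h
      obtain ⟨hD1, hD2⟩ := hK n hn
      linarith
    · have := hkey m n h
      obtain ⟨hD1, hD2⟩ := hK m hm
      have hsymm : (∫ x, ((ψ n x - ψ m x)/2)^2 ∂lam)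
          = ∫ x, ((ψ m x - ψ n x)/2)^2 ∂lam := by
        refine integral_congr_ae (ae_of_all _ fun x => ?_)
        ring
      rw [hsymm]
      linarith
  -- extract a rapidly Cauchy subsequence
  have hKex : ∀ j : ℕ, ∃ K : ℕ, ∀ n m : ℕ, K ≤ n → K ≤ m →
      (∫ x, ((ψ n x - ψ m x)/2)^2 ∂lam) ≤ (1/4:ℝ)^j :=
    fun j => hcauchy ((1/4:ℝ)^j) (by positivity)
  choose Kf hKf using hKex
  -- strictly increasing indices r j ≥ Kf j
  set r : ℕ → ℕ := fun j => Nat.rec (Kf 0) (fun k ih => max (Kf (k+1)) (ih + 1)) j with hr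
  have hr0 : r 0 = Kf 0 := rfl
  have hrsucc : ∀ j, r (j+1) = max (Kf (j+1)) (r j + 1) := fun j => rfl
  have hrK : ∀ j, Kf j ≤ r j := by
    intro j
    cases j with
    | zero => exact le_of_eq hr0.symm
    | succ k => rw [hrsucc]; exact le_max_left _ _
  have hrmono : StrictMono r := strictMono_nat_of_lt_succ fun j => by
    rw [hrsucc]; exact lt_of_lt_of_le (Nat.lt_succ_self _) (le_max_right _ _)
  have hrj : ∀ j, j ≤ r j := fun j => hrmono.le_apply
  set Φ : ℕ → S → ℝ := fun j => ψ (r j) with hΦ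
  have hΦA : ∀ j, Φ j ∈ A (r j) := fun j => hψA (r j)
  have hΦm : ∀ j, Measurable (Φ j) := fun j => (hΦA j).1
  have hΦb : ∀ j x, |Φ j x| ≤ M := fun j => (hΦA j).2.1
  have hΦf : ∀ j x y, Φ j x - Φ j y ≤ c (x, y) := fun j => (hΦA j).2.2.1
  have hΦV : ∀ j : ℕ, V - 1/((j:ℝ)+1) ≤ f (Φ j) := by
    intro j
    refine le_trans ?_ (hΦA j).2.2.2
    have : 1/((r j:ℝ)+1) ≤ 1/((j:ℝ)+1) := by
      apply one_div_le_one_div_of_le (by positivity)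
      exact_mod_cast add_le_add_left (Nat.cast_le.2 (hrj j)) 1
    linarith
  -- consecutive L² estimate
  have hΦcons : ∀ j : ℕ, (∫ x, ((Φ j x - Φ (j+1) x)/2)^2 ∂lam) ≤ (1/4:ℝ)^j := by
    intro j
    refine hKf j (r j) (r (j+1)) (hrK j) ?_
    exact le_trans (hrK j) (hrmono.monotone (Nat.le_succ j))
  -- L¹ estimate for the differences
  set dd : ℕ → S → ℝ := fun j x => Φ (j+1) x - Φ j x with hdd
  have hddm : ∀ j, Measurable (dd j) := fun j => (hΦm (j+1)).sub (hΦm j)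
  have hddb : ∀ j x, |dd j x| ≤ 2*M := by
    intro j x
    have h1 := hΦb (j+1) x
    have h2 := hΦb j x
    rw [abs_le] at h1 h2 ⊢
    constructor <;> [skip; skip] <;> simp only [hdd] <;>
      obtain ⟨a1, a2⟩ := h1 <;> obtain ⟨b1, b2⟩ := h2 <;> linarith
  have hddL1 : ∀ j : ℕ, (∫ x, |dd j x| ∂lam) ≤ 3 * (1/2:ℝ)^j := by
    intro j
    set t : ℝ := (1/2:ℝ)^j with ht
    have ht0 : 0 < t := by positivity
    have h4t : (1/4:ℝ)^j = t^2 := by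
      rw [ht, show ((1:ℝ)/4) = (1/2)^2 by norm_num, ← pow_mul, mul_comm, pow_mul]
    -- |u| ≤ u²/(2t) + t/2 pointwise
    have hpt : ∀ x, |dd j x| ≤ (dd j x)^2/(2*t) + t/2 := by
      intro x
      rw [div_add_div _ _ (by positivity : (2*t:ℝ) ≠ 0) (by norm_num : (2:ℝ) ≠ 0),
        le_div_iff₀ (by positivity)]
      nlinarith [sq_nonneg (|dd j x| - t), sq_abs (dd j x)]
    have hsq : (∫ x, (dd j x)^2 ∂lam) ≤ 4 * (1/4:ℝ)^j := by
      have h1 : (∫ x, ((dd j x)/2)^2 ∂lam) ≤ (1/4:ℝ)^j := by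
        have := hΦcons j
        have heq : (∫ x, ((Φ j x - Φ (j+1) x)/2)^2 ∂lam) = ∫ x, ((dd j x)/2)^2 ∂lam := by
          refine integral_congr_ae (ae_of_all _ fun x => ?_)
          simp only [hdd]; ring
        linarith [heq ▸ this]
      have heq2 : (∫ x, (dd j x)^2 ∂lam) = 4 * ∫ x, ((dd j x)/2)^2 ∂lam := by
        rw [← integral_const_mul]
        refine integral_congr_ae (ae_of_all _ fun x => ?_)
        ring
      rw [heq2]
      linarith
    have hintabs : Integrable (fun x => |dd j x|) lam :=
      hintlam (hddm j).abs (B := 2*M) (fun x => by rw [abs_abs]; exact hddb j x)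
    have hintsq : Integrable (fun x => (dd j x)^2) lam := by
      refine hintlam ((hddm j).pow_const 2) (B := (2*M)^2) fun x => ?_
      rw [abs_of_nonneg (sq_nonneg _), ← sq_abs]
      exact pow_le_pow_left₀ (abs_nonneg _) (hddb j x) 2
    have h2 : (∫ x, |dd j x| ∂lam) ≤ ∫ x, ((dd j x)^2/(2*t) + t/2) ∂lam :=
      integral_mono hintabs ((hintsq.div_const _).add (integrable_const _)) hpt
    have h3 : (∫ x, ((dd j x)^2/(2*t) + t/2) ∂lam)
        = (∫ x, (dd j x)^2 ∂lam)/(2*t) + t := by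
      rw [integral_add (hintsq.div_const _) (integrable_const _), integral_div,
        integral_const, measureReal_def, hlamuniv, smul_eq_mul]
      ring
    have h4 : (∫ x, (dd j x)^2 ∂lam)/(2*t) ≤ (4 * t^2)/(2*t) := by
      apply div_le_div_of_nonneg_right ?_ (by positivity)
      · rw [← h4t]; exact hsq
    have h5 : (4 * t^2)/(2*t) = 2*t := by
      field_simp
      ring
    calc (∫ x, |dd j x| ∂lam) ≤ (∫ x, (dd j x)^2 ∂lam)/(2*t) + t := h2.trans (le_of_eq h3)
    _ ≤ 2*t + t := by linarith [h4, h5 ▸ h4]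
    _ = 3 * t := by ring
  -- almost everywhere summability of differences
  have hae : ∀ᵐ x ∂lam, Summable fun j => dd j x := by
    have hmeas : ∀ j, Measurable fun x => (‖dd j x‖₊ : ENNReal) := fun j => (hddm j).nnnorm.coe_nnreal_ennreal
    have hmeas2 : Measurable fun x => ∑' j, (‖dd j x‖₊ : ENNReal) :=
      Measurable.ennreal_tsum hmeas
    have hlt : (∫⁻ x, ∑' j, (‖dd j x‖₊ : ENNReal) ∂lam) ≠ ⊤ := by
      rw [lintegral_tsum fun j => (hmeas j).aemeasurable]
      have hterm : ∀ j, (∫⁻ x, (‖dd j x‖₊ : ENNReal) ∂lam)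
          ≤ ENNReal.ofReal (3 * (1/2:ℝ)^j) := by
        intro j
        have hint : Integrable (dd j) lam := hintlam (hddm j) (hddb j)
        refine (le_of_eq (ofReal_integral_norm_eq_lintegral_enorm hint).symm).trans ?_
        apply ENNReal.ofReal_le_ofReal
        calc (∫ x, ‖dd j x‖ ∂lam) = ∫ x, |dd j x| ∂lam := by
              simp [Real.norm_eq_abs]
        _ ≤ 3 * (1/2:ℝ)^j := hddL1 j
      refine ne_top_of_le_ne_top ?_ (ENNReal.tsum_le_tsum hterm)
      rw [← ENNReal.ofReal_tsum_of_nonneg (fun j => by positivity)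
        (Summable.mul_left 3 (summable_geometric_of_lt_one (by norm_num) (by norm_num)))]
      exact ENNReal.ofReal_ne_top
    filter_upwards [ae_lt_top hmeas2 hlt] with x hx
    have h1 : Summable fun j => ‖dd j x‖₊ := ENNReal.tsum_coe_ne_top_iff_summable.1 hx.ne
    exact Summable.of_nnnorm h1
  -- a.e. convergence of Φ j to a limit
  have haeconv : ∀ᵐ x ∂lam, ∃ l : ℝ, Tendsto (fun j => Φ j x) atTop (nhds l) := by
    filter_upwards [hae] with x hx
    refine ⟨Φ 0 x + ∑' j, dd j x, ?_⟩
    have htel : ∀ J : ℕ, Φ J x = Φ 0 x + ∑ j ∈ Finset.range J, dd j x := by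
      intro J
      rw [Finset.sum_range_sub (fun j => Φ j x)]
      ring
    have := hx.hasSum.tendsto_sum_nat
    have h2 : Tendsto (fun J => Φ 0 x + ∑ j ∈ Finset.range J, dd j x) atTop
        (nhds (Φ 0 x + ∑' j, dd j x)) := tendsto_const_nhds.add this
    refine h2.congr fun J => (htel J).symm
  -- define the maximizer
  set φ : S → ℝ := fun x => auxLs fun j => Φ j x with hφ
  have hφm : Measurable φ := auxLs_measurable hΦm
  have hφb : ∀ x, |φ x| ≤ M := fun x => abs_auxLs_le (fun j => hΦb j x)
  have hφf : ∀ x y, φ x - φ y ≤ c (x, y) := fun x y =>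
    auxLs_sub_le (fun j => hΦb j x) (fun j => hΦb j y) (fun j => hΦf j x y)
  have hφlim : ∀ᵐ x ∂lam, Tendsto (fun j => Φ j x) atTop (nhds (φ x)) := by
    filter_upwards [haeconv] with x hx
    obtain ⟨l, hl⟩ := hx
    have : φ x = l := auxLs_eq_of_tendsto (fun j => hΦb j x) hl
    rwa [this]
  -- dominated convergence for μ and ν
  have hμlam : μ ≤ lam := Measure.le_add_right le_rfl
  have hνlam : ν ≤ lam := Measure.le_add_left le_rfl
  have hDCT : ∀ (κ : Measure S), κ ≤ lam → IsProbabilityMeasure κ →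
      Tendsto (fun j => ∫ x, Φ j x ∂κ) atTop (nhds (∫ x, φ x ∂κ)) := by
    intro κ hκ _
    refine tendsto_integral_of_dominated_convergence (fun _ => M)
      (fun j => (hΦm j).aestronglyMeasurable) (integrable_const _)
      (fun j => ae_of_all _ fun x => by simpa [Real.norm_eq_abs] using hΦb j x) ?_
    exact ae_mono hκ hφlim
  have hμt := hDCT μ hμlam inferInstance
  have hνt := hDCT ν hνlam inferInstance
  have hft : Tendsto (fun j => f (Φ j)) atTop (nhds (f φ)) := hμt.sub hνt
  -- f φ ≥ V
  have hfφV : V ≤ f φ := by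
    have h1 : Tendsto (fun j : ℕ => V - 1/((j:ℝ)+1)) atTop (nhds V) := by
      have h0 : Tendsto (fun j : ℕ => V - 1/((j:ℝ)+1)) atTop (nhds (V - 0)) :=
        tendsto_const_nhds.sub tendsto_one_div_add_atTop_nhds_zero_nat
      rwa [sub_zero] at h0
    exact le_of_tendsto_of_tendsto' h1 hft hΦV
  -- f φ ≤ V
  have hφT : Measurable φ ∧ (∃ B : ℝ, ∀ x, |φ x| ≤ B) ∧ ∀ x y, φ x - φ y ≤ c (x, y) :=
    ⟨hφm, ⟨M, hφb⟩, hφf⟩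
  have hfφV' : f φ ≤ V := le_ciSup hbdd (⟨φ, hφT⟩ : T)
  exact ⟨φ, hφm, ⟨M, hφb⟩, hφf, le_antisymm hfφV' hfφV⟩
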